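/- Let 𝒩 be a nonempty set, k a field of characteristic 0, K = k((ε)), φ : 𝒩 → k extended additively to words, and T the K-valued mould with T^∅ = 1 and T^{n₁⋯n_r}(ε) = 1/((φ(n₁)+ε)⋯(φ(n₁)+⋯+φ(n_r)+rε)). Let (U_-, U_+) be the Birkhoff decomposition of T, let S be the k-valued mould with S^{n̲} := constant term (ε⁰-coefficient) of U_+^{n̲} (so S^∅ = 1 and S is invertible in the mould algebra k^𝒩̲), and define the k-valued mould R̃ := S × I_k × S⁻¹ − (∇_φ S) × S⁻¹, regarded as K-valued via the inclusion k ⊂ K. Then ∇_Φ U_- = −R̃ × U_-, where (∇_Φ M)^{n̲}(ε) = (φ(n̲) + r(n̲)ε) M^{n̲}(ε). -/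

import Mathlib

set_option linter.unusedSectionVars false
set_option maxHeartbeats 1000000

open scoped Classical

/-- Shuffle coefficient: the number of ways the word `n` can be obtained by interleaving
the letters of `a` and `b` while preserving their internal orders. -/
noncomputable def sh {𝒩 : Type*} : List 𝒩 → List 𝒩 → List 𝒩 → ℕ
  | [], b, n => if b = n then 1 else 0
  | a, [], n => if a = n then 1 else 0
  | _ :: _, _ :: _, [] => 0
  | x :: a, y :: b, z :: n =>
      (if x = z then sh a (y :: b) n else 0) + (if y = z then sh (x :: a) b n else 0)

/-- Mould multiplication: `(M × N)^n = ∑_{n = a b} M^a N^b`. -/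
noncomputable def mmul {𝒩 A : Type*} [Semiring A] (M N : List 𝒩 → A) : List 𝒩 → A :=
  fun n => ∑ i ∈ Finset.range (n.length + 1), M (n.take i) * N (n.drop i)

/-- The unit mould `𝟙`. -/
noncomputable def munit {𝒩 A : Type*} [Semiring A] : List 𝒩 → A :=
  fun n => if n = [] then 1 else 0

/-- Membership in `K_- = ε⁻¹ k[ε⁻¹]`: all coefficients of nonnegative powers vanish. -/
def Kminus {k : Type*} [Field k] (f : LaurentSeries k) : Prop :=
  ∀ n : ℤ, 0 ≤ n → f.coeff n = 0

/-- Membership in `K_+ = k[[ε]]`: all coefficients of negative powers vanish. -/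
def Kplus {k : Type*} [Field k] (f : LaurentSeries k) : Prop :=
  ∀ n : ℤ, n < 0 → f.coeff n = 0

/-- Additive extension of `φ : 𝒩 → k` to words: `φ(n₁⋯n_r) = φ(n₁) + ⋯ + φ(n_r)`. -/
def phiw {𝒩 k : Type*} [AddCommMonoid k] (φ : 𝒩 → k) (l : List 𝒩) : k :=
  (l.map φ).sum

/-- The mould `I`: value `1` on words of length `1`, and `0` otherwise. -/
noncomputable def Imould {𝒩 A : Type*} [Semiring A] : List 𝒩 → A :=
  fun n => if n.length = 1 then 1 else 0

/-- The indeterminate `ε` of `K = k((ε))`. -/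
noncomputable def eps (k : Type*) [Field k] : LaurentSeries k :=
  HahnSeries.single (1 : ℤ) (1 : k)

/-- The mould `T`: `T^∅ = 1` and
`T^{n₁⋯n_r}(ε) = 1/((φ(n₁)+ε)(φ(n₁)+φ(n₂)+2ε)⋯(φ(n₁)+⋯+φ(n_r)+rε))`. -/
noncomputable def Tdef {𝒩 k : Type*} [Field k] (φ : 𝒩 → k) (l : List 𝒩) :
    LaurentSeries k :=
  (∏ i ∈ Finset.range l.length,
      ((HahnSeries.C (phiw φ (l.take (i + 1))) : LaurentSeries k) + (i + 1 : ℕ) • eps k))⁻¹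

/-! ### Auxiliary lemmas on mould algebra -/

section MA
variable {𝒩 A : Type*} [CommSemiring A]

lemma mmul_nil (M N : List 𝒩 → A) : mmul M N [] = M [] * N [] := by
  simp [mmul]

lemma mmul_const_mul (c : A) (M N : List 𝒩 → A) (n : List 𝒩) :
    mmul (fun l => c * M l) N n = c * mmul M N n := by
  simp [mmul, Finset.mul_sum, mul_assoc]

lemma mmul_cons (M N : List 𝒩 → A) (x : 𝒩) (n : List 𝒩) :
    mmul M N (x :: n) = M [] * N (x :: n) + mmul (fun l => M (x :: l)) N n := by
  unfold mmul
  rw [show (x :: n).length + 1 = (n.length + 1) + 1 by simp, Finset.sum_range_succ']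
  simp [add_comm]

lemma mmul_add_left (M M' N : List 𝒩 → A) (n : List 𝒩) :
    mmul (fun l => M l + M' l) N n = mmul M N n + mmul M' N n := by
  simp [mmul, add_mul, Finset.sum_add_distrib]

lemma mmul_munit (M : List 𝒩 → A) (n : List 𝒩) : mmul M munit n = M n := by
  unfold mmul munit
  rw [Finset.sum_eq_single n.length]
  · simp
  · intro i hi hne
    have hi' : i < n.length + 1 := Finset.mem_range.mp hi
    have : ¬ (n.drop i = []) := by
      rw [List.drop_eq_nil_iff]
      omega
    simp [this]
  · intro h
    exact absurd (Finset.mem_range.mpr (by omega)) h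

lemma mmul_assoc (M N P : List 𝒩 → A) (n : List 𝒩) :
    mmul (mmul M N) P n = mmul M (mmul N P) n := by
  induction n generalizing M with
  | nil => simp [mmul_nil, mul_assoc]
  | cons x n ih =>
    rw [mmul_cons, mmul_cons, mmul_cons, mmul_nil]
    have h1 : (fun l => mmul M N (x :: l))
        = fun l => M [] * N (x :: l) + mmul (fun l' => M (x :: l')) N l := by
      funext l; exact mmul_cons M N x l
    rw [h1, mmul_add_left, mmul_const_mul, ih]
    ring

lemma mmul_sub_left {B : Type*} [CommRing B] (M M' N : List 𝒩 → B) (n : List 𝒩) :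
    mmul (fun l => M l - M' l) N n = mmul M N n - mmul M' N n := by
  simp [mmul, sub_mul, Finset.sum_sub_distrib]

lemma mmul_Imould (M : List 𝒩 → A) (n : List 𝒩) (hn : n ≠ []) :
    mmul M Imould n = M (n.take (n.length - 1)) := by
  have hlen : 1 ≤ n.length := by
    cases n with
    | nil => simp at hn
    | cons _ _ => simp
  unfold mmul Imould
  rw [Finset.sum_eq_single (n.length - 1)]
  · have : (n.drop (n.length - 1)).length = 1 := by
      rw [List.length_drop]; omega
    rw [if_pos this, mul_one]
  · intro i hi hne
    have hi' : i < n.length + 1 := Finset.mem_range.mp hi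
    have : ¬ ((n.drop i).length = 1) := by
      rw [List.length_drop]; omega
    rw [if_neg this, mul_zero]
  · intro h
    exact absurd (Finset.mem_range.mpr (by omega)) h

lemma mmul_eq_self_of_prefix_zero (M N : List 𝒩 → A) (n : List 𝒩) (hN : N [] = 1)
    (h : ∀ i < n.length, M (n.take i) = 0) : mmul M N n = M n := by
  unfold mmul
  rw [Finset.sum_range_succ, List.take_length, List.drop_length, hN, mul_one,
    Finset.sum_eq_zero, zero_add]
  intro i hi
  rw [h i (Finset.mem_range.mp hi), zero_mul]

end MA

/-! ### Auxiliary lemmas on Laurent series -/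

section KP
variable {k : Type*} [Field k]

lemma kplus_C (c : k) : Kplus (HahnSeries.C c : LaurentSeries k) := by
  intro m hm
  rw [HahnSeries.C_apply, HahnSeries.coeff_single_of_ne (by omega)]

lemma kplus_one : Kplus (1 : LaurentSeries k) := by
  rw [← HahnSeries.C_one]; exact kplus_C 1

lemma kplus_zero : Kplus (0 : LaurentSeries k) := fun _ _ => rfl

lemma kplus_mul {f g : LaurentSeries k} (hf : Kplus f) (hg : Kplus g) : Kplus (f * g) := by
  intro m hm
  rw [HahnSeries.coeff_mul]
  refine Finset.sum_eq_zero fun ij hij => ?_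
  rw [Finset.mem_addAntidiagonal] at hij
  obtain ⟨h1, h2, h3⟩ := hij
  rcases lt_or_ge ij.1 0 with h | h
  · rw [hf _ h, zero_mul]
  · rw [hg _ (by omega), mul_zero]

lemma coeff_zero_mul {f g : LaurentSeries k} (hf : Kplus f) (hg : Kplus g) :
    (f * g).coeff 0 = f.coeff 0 * g.coeff 0 := by
  rw [HahnSeries.coeff_mul]
  refine Finset.sum_eq_single ((0 : ℤ), (0 : ℤ)) ?_ ?_
  · intro ij hij hne
    rw [Finset.mem_addAntidiagonal] at hij
    obtain ⟨h1, h2, h3⟩ := hij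
    rcases lt_or_ge ij.1 0 with h | h
    · exact absurd (hf _ h) h1
    rcases lt_or_ge ij.2 0 with h' | h'
    · exact absurd (hg _ h') h2
    have : ij = (0, 0) := Prod.ext (by omega) (by omega)
    exact absurd this hne
  · intro h
    rw [Finset.mem_addAntidiagonal] at h
    by_cases h0 : f.coeff 0 = 0
    · rw [show ((0,0) : ℤ × ℤ).1 = 0 from rfl, h0, zero_mul]
    by_cases h1 : g.coeff 0 = 0
    · rw [show ((0,0) : ℤ × ℤ).2 = 0 from rfl, h1, mul_zero]
    exact absurd ⟨(HahnSeries.mem_support f 0).mpr h0, (HahnSeries.mem_support g 0).mpr h1,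
      add_zero 0⟩ h

lemma nsmul_eps (m : ℕ) : (m • eps k) = HahnSeries.single (1 : ℤ) (m : k) := by
  apply HahnSeries.coeff_injective
  funext j
  rw [HahnSeries.coeff_nsmul]
  simp only [Pi.smul_apply, eps, HahnSeries.coeff_single]
  split <;> simp

lemma single_one_mul_coeff (c : k) (f : LaurentSeries k) (j : ℤ) :
    ((HahnSeries.single (1 : ℤ) c : LaurentSeries k) * f).coeff j = c * f.coeff (j - 1) := by
  have := HahnSeries.coeff_single_mul_add (r := c) (x := f) (a := j - 1) (b := 1)
  rwa [sub_add_cancel] at this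

lemma C_mul_coeff (c : k) (f : LaurentSeries k) (j : ℤ) :
    ((HahnSeries.C c : LaurentSeries k) * f).coeff j = c * f.coeff j := by
  rw [HahnSeries.C_apply, HahnSeries.coeff_single_zero_mul]

lemma coeff_sum {ι : Type*} (s : Finset ι) (f : ι → LaurentSeries k) (m : ℤ) :
    (∑ i ∈ s, f i).coeff m = ∑ i ∈ s, (f i).coeff m :=
  map_sum (AddMonoidHom.mk' (fun f : LaurentSeries k => f.coeff m)
    (fun _ _ => HahnSeries.coeff_add)) f s

lemma kplus_Imould {𝒩 : Type*} (l : List 𝒩) : Kplus (Imould l : LaurentSeries k) := by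
  unfold Imould
  split
  · exact kplus_one
  · exact kplus_zero

lemma Imould_coeff_zero {𝒩 : Type*} (l : List 𝒩) :
    (Imould l : LaurentSeries k).coeff 0 = (Imould l : k) := by
  unfold Imould
  split
  · exact HahnSeries.coeff_one.trans (by simp)
  · rfl

end KP

/-! ### Auxiliary lemmas on the mould `T` -/

section TD
variable {𝒩 k : Type*} [Field k] [CharZero k] (φ : 𝒩 → k)

lemma phiw_append (a b : List 𝒩) : phiw φ (a ++ b) = phiw φ a + phiw φ b := by
  simp [phiw]

lemma factor_ne_zero (c : k) (i : ℕ) :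
    (HahnSeries.C c : LaurentSeries k) + (i + 1 : ℕ) • eps k ≠ 0 := by
  intro h
  have := congrArg (fun f : LaurentSeries k => f.coeff 1) h
  simp only [HahnSeries.coeff_add, HahnSeries.coeff_zero] at this
  rw [HahnSeries.C_apply, HahnSeries.coeff_single_of_ne (by omega), nsmul_eps,
    HahnSeries.coeff_single_same, zero_add] at this
  exact (Nat.cast_ne_zero (R := k)).mpr (Nat.succ_ne_zero i) this

lemma Tdef_nil : Tdef φ ([] : List 𝒩) = 1 := by
  simp [Tdef]

lemma Phi_mul_Tdef (l : List 𝒩) (hl : l ≠ []) :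
    ((HahnSeries.C (phiw φ l) : LaurentSeries k) + l.length • eps k) * Tdef φ l
      = Tdef φ (l.take (l.length - 1)) := by
  obtain ⟨m, hm⟩ : ∃ m, l.length = m + 1 := by
    cases l with
    | nil => simp at hl
    | cons a t => exact ⟨t.length, rfl⟩
  have hTl : Tdef φ l
      = ((∏ i ∈ Finset.range m,
          ((HahnSeries.C (phiw φ (l.take (i + 1))) : LaurentSeries k) + (i + 1 : ℕ) • eps k))
        * ((HahnSeries.C (phiw φ l) : LaurentSeries k) + l.length • eps k))⁻¹ := by
    rw [Tdef, hm, Finset.prod_range_succ]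
    congr 2
    rw [← hm, List.take_length]
  have htake : Tdef φ (l.take (l.length - 1))
      = (∏ i ∈ Finset.range m,
          ((HahnSeries.C (phiw φ (l.take (i + 1))) : LaurentSeries k)
            + (i + 1 : ℕ) • eps k))⁻¹ := by
    rw [Tdef]
    have hlen : (l.take (l.length - 1)).length = m := by
      rw [List.length_take]; omega
    rw [hlen]
    congr 1
    refine Finset.prod_congr rfl fun i hi => ?_
    have hi' : i < m := Finset.mem_range.mp hi
    rw [List.take_take, min_eq_left (by omega)]
  rw [hTl, htake, mul_inv_rev]
  rw [← mul_assoc, mul_inv_cancel₀, one_mul]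
  rw [hm]
  exact factor_ne_zero (phiw φ l) m

lemma Phi_split (a b n : List 𝒩) (h : n = a ++ b) :
    (HahnSeries.C (phiw φ n) : LaurentSeries k) + n.length • eps k
      = ((HahnSeries.C (phiw φ a) : LaurentSeries k) + a.length • eps k)
        + ((HahnSeries.C (phiw φ b) : LaurentSeries k) + b.length • eps k) := by
  subst h
  rw [phiw_append, map_add, List.length_append, add_nsmul]
  ring

lemma mmul_deriv (M N : List 𝒩 → LaurentSeries k) (n : List 𝒩) :
    ((HahnSeries.C (phiw φ n) : LaurentSeries k) + n.length • eps k) * mmul M N n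
      = mmul (fun l => ((HahnSeries.C (phiw φ l) : LaurentSeries k) + l.length • eps k) * M l) N n
        + mmul M
            (fun l => ((HahnSeries.C (phiw φ l) : LaurentSeries k) + l.length • eps k) * N l)
            n := by
  unfold mmul
  rw [Finset.mul_sum, ← Finset.sum_add_distrib]
  refine Finset.sum_congr rfl fun i hi => ?_
  rw [Phi_split φ (n.take i) (n.drop i) n (List.take_append_drop i n).symm]
  ring

lemma Phi_mul_Tdef' (l : List 𝒩) :
    ((HahnSeries.C (phiw φ l) : LaurentSeries k) + l.length • eps k) * Tdef φ l
      = mmul (Tdef φ) Imould l := by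
  rcases eq_or_ne l [] with rfl | hl
  · rw [mmul_nil, Tdef_nil]
    show ((HahnSeries.C (phiw φ ([] : List 𝒩)) : LaurentSeries k) + (0 : ℕ) • eps k) * 1
      = 1 * (if ([] : List 𝒩).length = 1 then (1 : LaurentSeries k) else 0)
    simp [phiw]
  · rw [Phi_mul_Tdef φ l hl, mmul_Imould _ l hl]

end TD

/-- with `(U₋, U₊)` the Birkhoff decomposition of `T`,
`S` the mould of constant terms of `U₊` (with inverse `S⁻¹` in the mould algebra) and
`R̃ = S × I × S⁻¹ − (∇_φ S) × S⁻¹`, one has `∇_Φ U₋ = −R̃ × U₋`. -/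
theorem nablaPhi_Uminus
    {𝒩 k : Type*} [Nonempty 𝒩] [Field k] [CharZero k] (φ : 𝒩 → k)
    (Um Up : List 𝒩 → LaurentSeries k)
    (hUm0 : Um [] = 1) (hUp0 : Up [] = 1)
    (hUm : ∀ n : List 𝒩, n ≠ [] → Kminus (Um n))
    (hUp : ∀ n : List 𝒩, Kplus (Up n))
    (hEq : mmul Um (Tdef φ) = Up)
    (S : List 𝒩 → k) (hS : S = fun n => (Up n).coeff 0)
    (Sinv : List 𝒩 → k)
    (hSinv : mmul S Sinv = munit ∧ mmul Sinv S = munit)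
    (Rt : List 𝒩 → k)
    (hRt : Rt = fun n =>
      mmul (mmul S Imould) Sinv n - mmul (fun m => phiw φ m * S m) Sinv n) :
    (fun n : List 𝒩 =>
        ((HahnSeries.C (phiw φ n) : LaurentSeries k) + n.length • eps k) * Um n) =
      (fun n : List 𝒩 =>
        -mmul (fun l => (HahnSeries.C (Rt l) : LaurentSeries k)) Um n) := by
  have hSpt : ∀ l : List 𝒩, S l = (Up l).coeff 0 := fun l => by rw [hS]
  -- the purely `k`-valued mould identity
  have kident : ∀ n : List 𝒩,
      phiw φ n * S n - mmul S Imould n + mmul Rt S n = 0 := by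
    intro n
    have h1 : mmul Rt S n
        = mmul (mmul (mmul S Imould) Sinv) S n
          - mmul (mmul (fun m => phiw φ m * S m) Sinv) S n := by
      rw [hRt]
      exact mmul_sub_left _ _ _ n
    have h2 : (mmul Sinv S) = (munit : List 𝒩 → k) := hSinv.2
    rw [h1, mmul_assoc, h2, mmul_munit, mmul_assoc, h2, mmul_munit]
    show phiw φ n * S n - mmul S Imould n + (mmul S Imould n - phiw φ n * S n) = 0
    ring
  -- the main induction
  have key : ∀ r : ℕ, ∀ n : List 𝒩, n.length = r →
      ((HahnSeries.C (phiw φ n) : LaurentSeries k) + n.length • eps k) * Um n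
        + mmul (fun l => (HahnSeries.C (Rt l) : LaurentSeries k)) Um n = 0 := by
    intro r
    induction r using Nat.strong_induction_on with
    | _ r ih =>
    intro n hn
    rcases eq_or_ne n [] with rfl | hne
    · -- base case `n = []`
      have hRt0 : Rt ([] : List 𝒩) = 0 := by
        rw [hRt]
        show mmul (mmul S Imould) Sinv [] - mmul (fun m => phiw φ m * S m) Sinv [] = 0
        rw [mmul_nil, mmul_nil, mmul_nil]
        simp [Imould, phiw]
      rw [mmul_nil, hRt0, hUm0]
      simp [phiw]
    -- inductive step
    · have hd := mmul_deriv φ Um (Tdef φ) n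
      rw [hEq] at hd
      have hET : (fun l : List 𝒩 =>
            ((HahnSeries.C (phiw φ l) : LaurentSeries k) + l.length • eps k) * Tdef φ l)
          = mmul (Tdef φ) Imould := funext fun l => Phi_mul_Tdef' φ l
      rw [hET, ← mmul_assoc, hEq] at hd
      -- hd : Phi n * Up n = mmul (∇Um) (Tdef φ) n + mmul Up Imould n
      have hstep3 : mmul (mmul (fun l => (HahnSeries.C (Rt l) : LaurentSeries k)) Um)
            (Tdef φ) n
          = mmul (fun l => (HahnSeries.C (Rt l) : LaurentSeries k)) Up n := by
        rw [mmul_assoc, hEq]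
      have hDrop : mmul
            (fun l => ((HahnSeries.C (phiw φ l) : LaurentSeries k) + l.length • eps k) * Um l
              + mmul (fun l' => (HahnSeries.C (Rt l') : LaurentSeries k)) Um l)
            (Tdef φ) n
          = ((HahnSeries.C (phiw φ n) : LaurentSeries k) + n.length • eps k) * Um n
              + mmul (fun l => (HahnSeries.C (Rt l) : LaurentSeries k)) Um n := by
        refine mmul_eq_self_of_prefix_zero _ _ n (Tdef_nil φ) fun i hi => ?_
        have hlen : (n.take i).length = i := by
          rw [List.length_take]; omega
        exact ih i (by omega) (n.take i) hlen
      have hsplit := mmul_add_left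
        (fun l => ((HahnSeries.C (phiw φ l) : LaurentSeries k) + l.length • eps k) * Um l)
        (mmul (fun l' => (HahnSeries.C (Rt l') : LaurentSeries k)) Um) (Tdef φ) n
      rw [hDrop] at hsplit
      rw [hstep3] at hsplit
      -- hsplit : D n = mmul ∇Um T n + mmul CR Up n
      have hD : ((HahnSeries.C (phiw φ n) : LaurentSeries k) + n.length • eps k) * Um n
            + mmul (fun l => (HahnSeries.C (Rt l) : LaurentSeries k)) Um n
          = (((HahnSeries.C (phiw φ n) : LaurentSeries k) + n.length • eps k) * Up n
              - mmul Up Imould n)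
            + mmul (fun l => (HahnSeries.C (Rt l) : LaurentSeries k)) Up n := by
        rw [hsplit, eq_sub_of_add_eq hd.symm]
      -- now show the common value is `0` coefficientwise
      apply HahnSeries.coeff_injective
      funext m
      show _ = (0 : LaurentSeries k).coeff m
      rw [HahnSeries.coeff_zero]
      rcases lt_trichotomy m 0 with hm | hm | hm
      · -- negative coefficients: use the `K₊` expression
        rw [hD, HahnSeries.coeff_add, HahnSeries.coeff_sub, add_mul, HahnSeries.coeff_add,
          C_mul_coeff, nsmul_eps, single_one_mul_coeff]
        rw [hUp n m hm, hUp n (m - 1) (by omega)]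
        have hI : (mmul Up (Imould : List 𝒩 → LaurentSeries k) n).coeff m = 0 := by
          unfold mmul
          rw [coeff_sum]
          exact Finset.sum_eq_zero fun i _ =>
            kplus_mul (hUp _) (kplus_Imould _) m hm
        have hCR : (mmul (fun l => (HahnSeries.C (Rt l) : LaurentSeries k)) Up n).coeff m
            = 0 := by
          unfold mmul
          rw [coeff_sum]
          exact Finset.sum_eq_zero fun i _ =>
            kplus_mul (kplus_C _) (hUp _) m hm
        rw [hI, hCR]
        ring
      · -- the constant coefficient: use the `k`-valued mould identity
        subst hm
        rw [hD, HahnSeries.coeff_add, HahnSeries.coeff_sub, add_mul, HahnSeries.coeff_add,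
          C_mul_coeff, nsmul_eps, single_one_mul_coeff]
        rw [hUp n (0 - 1) (by omega)]
        have hI : (mmul Up (Imould : List 𝒩 → LaurentSeries k) n).coeff 0
            = mmul S Imould n := by
          unfold mmul
          rw [coeff_sum]
          refine Finset.sum_congr rfl fun i _ => ?_
          rw [coeff_zero_mul (hUp _) (kplus_Imould _), Imould_coeff_zero, hSpt]
        have hCR : (mmul (fun l => (HahnSeries.C (Rt l) : LaurentSeries k)) Up n).coeff 0
            = mmul Rt S n := by
          unfold mmul
          rw [coeff_sum]
          refine Finset.sum_congr rfl fun i _ => ?_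
          rw [coeff_zero_mul (kplus_C _) (hUp _), HahnSeries.C_apply,
            HahnSeries.coeff_single_same, hSpt]
        rw [hI, hCR, ← hSpt]
        linear_combination kident n
      · -- positive coefficients: use the `K₋` expression
        rw [HahnSeries.coeff_add, add_mul, HahnSeries.coeff_add,
          C_mul_coeff, nsmul_eps, single_one_mul_coeff]
        rw [hUm n hne m (by omega), hUm n hne (m - 1) (by omega)]
        have hCR : (mmul (fun l => (HahnSeries.C (Rt l) : LaurentSeries k)) Um n).coeff m
            = 0 := by
          unfold mmul
          rw [coeff_sum]
          refine Finset.sum_eq_zero fun i hi => ?_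
          rw [C_mul_coeff]
          rcases eq_or_ne (n.drop i) [] with hd0 | hd0
          · rw [hd0, hUm0, HahnSeries.coeff_one, if_neg (by omega), mul_zero]
          · rw [hUm _ hd0 m (by omega), mul_zero]
        rw [hCR]
        ring
  -- conclude
  funext n
  have h := key n.length n rfl
  have := eq_neg_of_add_eq_zero_left h
  rw [this]
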